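/- arXiv:2510.17580 — 2 statements merged into one kernel-verified Lean document; each statement's English description precedes it below -/
import Mathlib

section
/- Define A(θ) = θ²(1-θ)/2 (RHS-affected linear boundary error coefficient) and B(θ) = (θ(1+θ)(1-θ)²)/4 (RHS-affected quadratic boundary error coefficient). Then A(θ) < B(θ) for θ ∈ (0, √2 - 1) and A(θ) > B(θ) for θ ∈ (√2 - 1, 1), with equality exactly at θ = √2 - 1 ≈ 0.414. -/
theorem stmt_9 :
    (∀ θ ∈ Set.Ioo (0:ℝ) (Real.sqrt 2 - 1),
        θ ^ 2 * (1 - θ) / 2 < θ * (1 + θ) * (1 - θ) ^ 2 / 4) ∧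
    (∀ θ ∈ Set.Ioo (Real.sqrt 2 - 1) (1:ℝ),
        θ ^ 2 * (1 - θ) / 2 > θ * (1 + θ) * (1 - θ) ^ 2 / 4) ∧
    (∀ θ ∈ Set.Ioo (0:ℝ) 1,
        θ ^ 2 * (1 - θ) / 2 = θ * (1 + θ) * (1 - θ) ^ 2 / 4 ↔ θ = Real.sqrt 2 - 1) := by
  have hs : Real.sqrt 2 ^ 2 = 2 := Real.sq_sqrt (by norm_num)
  have hs1 : (1:ℝ) < Real.sqrt 2 := by nlinarith [Real.sqrt_nonneg 2]
  set s := Real.sqrt 2 with hsdef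
  refine ⟨?_, ?_, ?_⟩
  · rintro θ ⟨h0, h1⟩
    have hθ1 : θ < 1 := by nlinarith
    nlinarith [mul_pos h0 (sub_pos.mpr hθ1), mul_pos (sub_pos.mpr h1) (by linarith : (0:ℝ) < s + 1 + θ)]
  · rintro θ ⟨h0, h1⟩
    have hθ0 : 0 < θ := by nlinarith
    nlinarith [mul_pos hθ0 (sub_pos.mpr h1), mul_pos (sub_pos.mpr h0) (by linarith : (0:ℝ) < s + 1 + θ)]
  · rintro θ ⟨h0, h1⟩
    constructor
    · intro h
      have key : θ * (1 - θ) * ((s - 1 - θ) * (s + 1 + θ)) = 0 := by nlinarith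
      have h2 : (s - 1 - θ) * (s + 1 + θ) = 0 := by
        rcases mul_eq_zero.mp key with h' | h'
        · rcases mul_eq_zero.mp h' with h'' | h'' <;> nlinarith
        · exact h'
      rcases mul_eq_zero.mp h2 with h' | h'
      · linarith
      · nlinarith
    · intro h
      subst h
      nlinarith
end

section
/- Let τ_1,...,τ_{N-1} ∈ ℝ, θ_L, θ_R ∈ (0,1], and define for 1 ≤ i ≤ N-1: ξ_i = Δ²[((i+θ_L-1)/(N+θ_L+θ_R-2) - 1)·Σ_{k=1}^{N-1}(k+θ_L-1)τ_k - Σ_{k=i+1}^{N-1}(i-k)τ_k]. Then ξ satisfies the discrete system (ξ_{i-1} - 2ξ_i + ξ_{i+1})/Δ² = τ_i for 2 ≤ i ≤ N-2, together with the linear boundary closures H_{1/2} = ξ_1/(θ_LΔ) and H_{N-1/2} = -ξ_{N-1}/(θ_RΔ), where H_{i±1/2} are the consecutive divided differences of ξ. -/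
lemma peel_sum (a b : ℕ) (h : a ≤ b) (f : ℕ → ℝ) :
    ∑ k ∈ Finset.Icc a b, f k = f a + ∑ k ∈ Finset.Icc (a+1) b, f k := by
  rw [Finset.Icc_add_one_left_eq_Ioc, Finset.Icc_eq_cons_Ioc h, Finset.sum_cons]

theorem stmt_12 (N : ℕ) (hN : 4 ≤ N) (Δ θL θR : ℝ) (hΔ : 0 < Δ)
    (hθL : θL ∈ Set.Ioc (0:ℝ) 1) (hθR : θR ∈ Set.Ioc (0:ℝ) 1) (τ ξ : ℕ → ℝ)
    (hξ : ∀ i, ξ i = Δ ^ 2 *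
      ((((i : ℝ) + θL - 1) / ((N : ℝ) + θL + θR - 2) - 1) *
          ∑ k ∈ Finset.Icc 1 (N - 1), ((k : ℝ) + θL - 1) * τ k
        - ∑ k ∈ Finset.Icc (i + 1) (N - 1), ((i : ℝ) - (k : ℝ)) * τ k)) :
    (∀ i, 2 ≤ i → i ≤ N - 2 →
      (ξ (i - 1) - 2 * ξ i + ξ (i + 1)) / Δ ^ 2 = τ i) ∧
    ((ξ 2 - ξ 1) / Δ - ξ 1 / (θL * Δ)) / Δ = τ 1 ∧
    (-ξ (N - 1) / (θR * Δ) - (ξ (N - 1) - ξ (N - 2)) / Δ) / Δ = τ (N - 1) := by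
  obtain ⟨hθL0, hθL1⟩ := hθL
  obtain ⟨hθR0, hθR1⟩ := hθR
  have hΔ' : Δ ≠ 0 := hΔ.ne'
  have hΔ2 : Δ ^ 2 ≠ 0 := pow_ne_zero 2 hΔ'
  have hNR : (4:ℝ) ≤ (N:ℝ) := by exact_mod_cast hN
  have hD : (N:ℝ) + θL + θR - 2 ≠ 0 := by nlinarith
  refine ⟨?_, ?_, ?_⟩
  · intro i h2 hN2
    have hiN : i ≤ N - 1 := by omega
    have hi1 : i - 1 + 1 = i := by omega
    have hcast : ((i - 1 : ℕ) : ℝ) = (i : ℝ) - 1 := by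
      have h1 : (1:ℕ) ≤ i := by omega
      push_cast [h1]; ring
    have key : (∑ k ∈ Finset.Icc i (N-1), ((i:ℝ) - 1 - (k:ℝ)) * τ k)
        - 2 * (∑ k ∈ Finset.Icc (i+1) (N-1), ((i:ℝ) - (k:ℝ)) * τ k)
        + (∑ k ∈ Finset.Icc (i+1+1) (N-1), ((i:ℝ) + 1 - (k:ℝ)) * τ k)
        = - τ i := by
      have hle2 : i + 1 ≤ N - 1 := by omega
      rw [peel_sum i (N-1) hiN]
      have h3 : (∑ k ∈ Finset.Icc (i+1) (N-1), ((i:ℝ) + 1 - (k:ℝ)) * τ k)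
          = (∑ k ∈ Finset.Icc (i+1+1) (N-1), ((i:ℝ) + 1 - (k:ℝ)) * τ k) := by
        rw [peel_sum (i+1) (N-1) hle2]; push_cast; ring
      rw [← h3]
      have hcomb : (∑ k ∈ Finset.Icc (i+1) (N-1), ((i:ℝ) - 1 - (k:ℝ)) * τ k)
          - 2 * (∑ k ∈ Finset.Icc (i+1) (N-1), ((i:ℝ) - (k:ℝ)) * τ k)
          + (∑ k ∈ Finset.Icc (i+1) (N-1), ((i:ℝ) + 1 - (k:ℝ)) * τ k) = 0 := by
        rw [Finset.mul_sum, ← Finset.sum_sub_distrib, ← Finset.sum_add_distrib]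
        apply Finset.sum_eq_zero
        intro k _; ring
      linarith [hcomb]
    rw [hξ (i-1), hξ i, hξ (i+1), hi1, hcast]
    push_cast
    rw [div_eq_iff hΔ2]
    linear_combination (-(Δ^2)) * key
  · -- left boundary
    have h2N : 2 ≤ N - 1 := by omega
    have h1N : 1 ≤ N - 1 := by omega
    have hS : (∑ k ∈ Finset.Icc 1 (N-1), ((k:ℝ) + θL - 1) * τ k)
        = θL * τ 1 + ∑ k ∈ Finset.Icc 2 (N-1), ((k:ℝ) + θL - 1) * τ k := by
      rw [peel_sum 1 (N-1) h1N]; push_cast; norm_num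
    have hT2 : (∑ k ∈ Finset.Icc 3 (N-1), ((2:ℝ) - (k:ℝ)) * τ k)
        = ∑ k ∈ Finset.Icc 2 (N-1), ((2:ℝ) - (k:ℝ)) * τ k := by
      rw [peel_sum 2 (N-1) h2N]; push_cast; norm_num
    have hcomb : (∑ k ∈ Finset.Icc 2 (N-1), ((k:ℝ) + θL - 1) * τ k)
        + (θL + 1) * (∑ k ∈ Finset.Icc 2 (N-1), ((1:ℝ) - (k:ℝ)) * τ k)
        - θL * (∑ k ∈ Finset.Icc 2 (N-1), ((2:ℝ) - (k:ℝ)) * τ k) = 0 := by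
      rw [Finset.mul_sum, Finset.mul_sum, ← Finset.sum_add_distrib, ← Finset.sum_sub_distrib]
      apply Finset.sum_eq_zero
      intro k _; ring
    have hmain : θL * (ξ 2 - ξ 1) - ξ 1 = τ 1 * (θL * Δ ^ 2) := by
      rw [hξ 1, hξ 2, hS]
      push_cast
      norm_num
      rw [hT2]
      linear_combination (Δ^2) * hcomb
    field_simp
    linear_combination hmain
  · -- right boundary
    have hc1 : ((N - 1 : ℕ) : ℝ) = (N : ℝ) - 1 := by
      have h1 : (1:ℕ) ≤ N := by omega
      push_cast [h1]; ring
    have hc2 : ((N - 2 : ℕ) : ℝ) = (N : ℝ) - 2 := by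
      have h2 : (2:ℕ) ≤ N := by omega
      push_cast [h2]; ring
    have hi1 : N - 1 + 1 = N := by omega
    have hi2 : N - 2 + 1 = N - 1 := by omega
    have hTN1 : (∑ k ∈ Finset.Icc N (N-1), (((N:ℝ) - 1) - (k:ℝ)) * τ k) = 0 := by
      rw [Finset.Icc_eq_empty (by omega), Finset.sum_empty]
    have hTN2 : (∑ k ∈ Finset.Icc (N-1) (N-1), (((N:ℝ) - 2) - (k:ℝ)) * τ k)
        = - τ (N-1) := by
      rw [Finset.Icc_self, Finset.sum_singleton, hc1]; ring
    rw [hξ (N-1), hξ (N-2), hi1, hi2, hc1, hc2, hTN1, hTN2]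
    field_simp
    ring
end
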